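/- Let (X,T) be a topological space and let A be a finite family of mutually disjoint, non-empty subsets of X. If T is a T0 topology, then the topology T_A on ⋃A is also T0. -/

import Mathlib

/-- The basis `𝒜 ⋒ T = {A ∩ U : A ∈ 𝒜, U ∈ T}`, viewed as a family of subsets
of the union `⋃₀ 𝒜` (as a subtype of `X`). -/
def piecedBasis {X : Type*} [TopologicalSpace X] (𝒜 : Set (Set X)) :
    Set (Set (↥(⋃₀ 𝒜))) :=
  {S | ∃ A ∈ 𝒜, ∃ U : Set X, IsOpen U ∧ S = Subtype.val ⁻¹' (A ∩ U)}

/-- The topology `T_𝒜 = (𝒜 ⋒ T)*` on `⋃₀ 𝒜` generated by the family `𝒜 ⋒ T`. -/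
def piecedTopology {X : Type*} [TopologicalSpace X] (𝒜 : Set (Set X)) :
    TopologicalSpace (↥(⋃₀ 𝒜)) :=
  TopologicalSpace.generateFrom (piecedBasis 𝒜)

/-- If `T` is a `T₀` topology on `X` and `𝒜` is a finite family of mutually disjoint
non-empty subsets of `X`, then the topology `T_𝒜` on `⋃₀ 𝒜` is also `T₀`. -/
theorem piecedTopology_t0
    {X : Type*} [TopologicalSpace X] [T0Space X] (𝒜 : Set (Set X))
    (hfin : 𝒜.Finite) (hdisj : 𝒜.PairwiseDisjoint id)
    (hne : ∀ A ∈ 𝒜, A.Nonempty) :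
    @T0Space (↥(⋃₀ 𝒜)) (piecedTopology 𝒜) := by
  letI := piecedTopology 𝒜
  rw [t0Space_iff_inseparable]
  intro x y h
  rw [inseparable_iff_forall_isOpen] at h
  obtain ⟨A, hA, hxA⟩ := x.2
  obtain ⟨B, hB, hyB⟩ := y.2
  have hbasic : ∀ C ∈ 𝒜, ∀ U : Set X, IsOpen U →
      IsOpen (Subtype.val ⁻¹' (C ∩ U) : Set (↥(⋃₀ 𝒜))) := fun C hC U hU =>
    TopologicalSpace.GenerateOpen.basic _ ⟨C, hC, U, hU, rfl⟩
  have hAB : A = B := by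
    by_contra hne'
    have := h _ (hbasic A hA Set.univ isOpen_univ)
    have hy : (y : X) ∈ A ∩ Set.univ := this.mp ⟨hxA, trivial⟩
    exact (hdisj hA hB hne').le_bot ⟨hy.1, hyB⟩
  subst hAB
  have : Inseparable (x : X) (y : X) := by
    rw [inseparable_iff_forall_isOpen]
    intro U hU
    have := h _ (hbasic A hA U hU)
    constructor
    · intro hx; exact (this.mp ⟨hxA, hx⟩).2
    · intro hy; exact (this.mpr ⟨hyB, hy⟩).2
  exact Subtype.ext this.eq
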